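/- For every positive integer n, det_{0≤i,j≤n-1}(C_{i+j+2}) = n+1. -/

import Mathlib

/-! We prove the shift-2 Hankel determinant of Catalan numbers is `n+1`.

Strategy: let `cpath m h` count nonnegative lattice paths of length `m` from `0` to `h`.
Then `catalan p = cpath (2p) 0`, and the Hankel matrix `H = (catalan (i+j+2))` factors as
`A * Aᵀ` with `A i h = cpath (2i+2) (2h)` (an `n × (n+1)` matrix), by splitting a Dyck path
of length `2(i+j+2)` at its midpoint.  Moreover `A = L * J` where
`L i k = cpath (2i+1) (2k+1)` is unit lower triangular and `J` is the bidiagonal 0/1 matrix,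
so `det H = det L * det (J * Jᵀ) * det Lᵀ = det (tridiagonal (1,2,1)) = n+1`. -/

/-- `cpath m h` = number of paths with `m` ±1 steps from `0` to `h` staying nonnegative. -/
def cpath : ℕ → ℕ → ℕ
  | 0, 0 => 1
  | 0, _+1 => 0
  | m+1, 0 => cpath m 1
  | m+1, h+1 => cpath m h + cpath m (h+2)

lemma cpath_succ_zero (m : ℕ) : cpath (m+1) 0 = cpath m 1 := rfl
lemma cpath_succ_succ (m h : ℕ) : cpath (m+1) (h+1) = cpath m h + cpath m (h+2) := rfl

lemma cpath_of_lt : ∀ m h, m < h → cpath m h = 0 := by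
  intro m
  induction m with
  | zero => intro h hh; match h, hh with
            | h+1, _ => rfl
  | succ m ih =>
    intro h hh
    match h, hh with
    | h+1, hh => rw [cpath_succ_succ, ih h (by omega), ih (h+2) (by omega)]

lemma cpath_diag : ∀ m, cpath m m = 1 := by
  intro m
  induction m with
  | zero => rfl
  | succ m ih =>
    rw [cpath_succ_succ, ih, cpath_of_lt m (m+2) (by omega)]

lemma cpath_odd : ∀ t h, cpath (h + 2*t + 1) h = 0 := by
  intro t
  induction t with
  | zero =>
    intro h
    induction h with
    | zero => rfl
    | succ h ihh =>
      have e : h + 1 + 2*0 + 1 = (h + 2*0 + 1) + 1 := by ring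
      rw [e, cpath_succ_succ, ihh, cpath_of_lt (h + 2*0 + 1) (h+2) (by omega)]
  | succ t ih =>
    intro h
    induction h with
    | zero =>
      have e : 0 + 2*(t+1) + 1 = (1 + 2*t + 1) + 1 := by ring
      rw [e, cpath_succ_zero]
      exact ih 1
    | succ h ihh =>
      have e : h + 1 + 2*(t+1) + 1 = (h + 2*(t+1) + 1) + 1 := by ring
      rw [e, cpath_succ_succ, ihh]
      have e2 : h + 2*(t+1) + 1 = (h+2) + 2*t + 1 := by ring
      rw [e2, ih (h+2)]

lemma cpath_even_odd (a k : ℕ) : cpath (2*a) (2*k+1) = 0 := by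
  rcases le_or_gt (2*k+1) (2*a) with h | h
  · have e : 2*a = (2*k+1) + 2*(a - k - 1) + 1 := by omega
    rw [e]; exact cpath_odd _ _
  · exact cpath_of_lt _ _ h

lemma chg {n1 n2 k1 k2 : ℕ} (hn : n1 = n2) (hk : k1 = k2) : n1.choose k1 = n2.choose k2 := by
  subst hn; subst hk; rfl

lemma cpath_cf : ∀ t h, (cpath (h + 2*t) h : ℤ) =
    (h + 2*t).choose (h + t) - (h + 2*t).choose (h + t + 1) := by
  intro t
  induction t with
  | zero =>
    intro h
    simp [cpath_diag, Nat.choose_self, Nat.choose_succ_self]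
  | succ t ih =>
    intro h
    induction h with
    | zero =>
      have e : 0 + 2*(t+1) = (1 + 2*t) + 1 := by ring
      rw [e, cpath_succ_zero, ih 1]
      have p1 : ((1+2*t) + 1).choose (0+(t+1)) = (1+2*t).choose t + (1+2*t).choose (t+1) := by
        rw [chg (rfl : (1+2*t)+1 = (1+2*t)+1) (show 0+(t+1) = t+1 by omega)]
        exact Nat.choose_succ_succ' _ _
      have p2 : ((1+2*t) + 1).choose (0+(t+1)+1) = (1+2*t).choose (t+1) + (1+2*t).choose (t+2) := by
        rw [chg (rfl : (1+2*t)+1 = (1+2*t)+1) (show 0+(t+1)+1 = (t+1)+1 by omega)]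
        have := Nat.choose_succ_succ' (1+2*t) (t+1)
        rw [this]
      have s : (1+2*t).choose (1+t) = (1+2*t).choose t := by
        rw [← Nat.choose_symm (show t ≤ 1+2*t by omega)]
        exact chg rfl (by omega)
      have s2 : (1+2*t).choose (1+t+1) = (1+2*t).choose (t+2) := chg rfl (by omega)
      rw [p1, p2, s, s2]
      push_cast
      ring
    | succ h ihh =>
      have e : h + 1 + 2*(t+1) = (h + 2*(t+1)) + 1 := by ring
      rw [e, cpath_succ_succ]
      have ih2 := ih (h+2)
      rw [show h+2+2*t = h+2*(t+1) from by ring] at ih2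
      push_cast
      rw [ihh, ih2]
      have p1 : (((h + 2*(t+1)) + 1).choose (h+1+(t+1)) : ℤ) =
          ((h + 2*(t+1)).choose (h+(t+1)) : ℤ) + ((h + 2*(t+1)).choose (h+2+t) : ℤ) := by
        rw [chg rfl (show h+1+(t+1) = (h+(t+1))+1 by omega), Nat.choose_succ_succ']
        rw [chg (rfl : h+2*(t+1) = _) (show h+(t+1)+1 = h+2+t by omega)]
        push_cast; ring
      have p2 : (((h + 2*(t+1)) + 1).choose (h+1+(t+1)+1) : ℤ) =
          ((h + 2*(t+1)).choose (h+2+t) : ℤ) + ((h + 2*(t+1)).choose (h+2+t+1) : ℤ) := by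
        rw [chg rfl (show h+1+(t+1)+1 = (h+2+t)+1 by omega), Nat.choose_succ_succ']
        push_cast; ring
      have c1 : ((h+2*(t+1)).choose (h+(t+1)+1) : ℤ) = ((h+2*(t+1)).choose (h+2+t) : ℤ) := by
        rw [chg (rfl : h+2*(t+1) = _) (show h+(t+1)+1 = h+2+t by omega)]
      rw [p1, p2, c1]
      ring

lemma cpath_swap (m q M : ℕ) (hm : m + 2 ≤ M) (hq : q + 2 ≤ M) :
    ∑ h ∈ Finset.range M, cpath (m+1) h * cpath q h
      = ∑ h ∈ Finset.range M, cpath m h * cpath (q+1) h := by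
  obtain ⟨K, rfl⟩ : ∃ K, M = K + 1 := ⟨M - 1, by omega⟩
  have kf : (∑ h ∈ Finset.range K, cpath m (h+1) * cpath q (h+2)) + cpath m 0 * cpath q 1
      = ∑ h ∈ Finset.range K, cpath m h * cpath q (h+1) := by
    have h1 := Finset.sum_range_succ' (fun h => cpath m h * cpath q (h+1)) K
    rw [Finset.sum_range_succ, cpath_of_lt m K (by omega), zero_mul, add_zero] at h1
    exact h1.symm
  have kg : (∑ h ∈ Finset.range K, cpath q (h+1) * cpath m (h+2)) + cpath q 0 * cpath m 1
      = ∑ h ∈ Finset.range K, cpath q h * cpath m (h+1) := by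
    have h1 := Finset.sum_range_succ' (fun h => cpath q h * cpath m (h+1)) K
    rw [Finset.sum_range_succ, cpath_of_lt q K (by omega), zero_mul, add_zero] at h1
    exact h1.symm
  have e1 : ∑ h ∈ Finset.range (K+1), cpath (m+1) h * cpath q h
      = ((∑ h ∈ Finset.range K, cpath m h * cpath q (h+1))
          + ∑ h ∈ Finset.range K, cpath q (h+1) * cpath m (h+2))
        + cpath m 1 * cpath q 0 := by
    rw [Finset.sum_range_succ', ← Finset.sum_add_distrib]
    have hterm : ∀ h, cpath (m+1) (h+1) * cpath q (h+1)
        = cpath m h * cpath q (h+1) + cpath q (h+1) * cpath m (h+2) := fun h => by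
      rw [cpath_succ_succ]; ring
    simp only [hterm, cpath_succ_zero]
  have e2 : ∑ h ∈ Finset.range (K+1), cpath m h * cpath (q+1) h
      = ((∑ h ∈ Finset.range K, cpath q h * cpath m (h+1))
          + ∑ h ∈ Finset.range K, cpath m (h+1) * cpath q (h+2))
        + cpath m 0 * cpath q 1 := by
    rw [Finset.sum_range_succ', ← Finset.sum_add_distrib]
    have hterm : ∀ h, cpath m (h+1) * cpath (q+1) (h+1)
        = cpath q h * cpath m (h+1) + cpath m (h+1) * cpath q (h+2) := fun h => by
      rw [cpath_succ_succ]; ring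
    simp only [hterm, cpath_succ_zero]
  have hc : cpath q 0 * cpath m 1 = cpath m 1 * cpath q 0 := mul_comm _ _
  rw [e1, e2]
  omega

lemma cpath_conv : ∀ q p M, p + q + 2 ≤ M →
    ∑ h ∈ Finset.range M, cpath p h * cpath q h = cpath (p+q) 0 := by
  intro q
  induction q with
  | zero =>
    intro p M hM
    rw [Finset.sum_eq_single_of_mem 0 (Finset.mem_range.mpr (by omega))]
    · show cpath p 0 * cpath 0 0 = cpath (p+0) 0
      simp [show cpath 0 0 = 1 from rfl]
    · intro b _ hb
      obtain ⟨h, rfl⟩ : ∃ h, b = h + 1 := ⟨b - 1, by omega⟩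
      show cpath p (h+1) * cpath 0 (h+1) = 0
      simp [show cpath 0 (h+1) = 0 from rfl]
  | succ q ih =>
    intro p M hM
    rw [← cpath_swap p q M (by omega) (by omega)]
    rw [ih (p+1) M (by omega)]
    congr 1
    omega

lemma cpath_catalan (p : ℕ) : cpath (2*p) 0 = catalan p := by
  have cf := cpath_cf p 0
  simp only [Nat.zero_add] at cf
  have key : ((p:ℤ) + 1) * cpath (2*p) 0 = ((p:ℤ)+1) * catalan p := by
    have hc : ((p:ℤ)+1) * catalan p = (2*p).choose p := by
      have h3 : (p + 1) * catalan p = (2*p).choose p := by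
        rw [succ_mul_catalan_eq_centralBinom, Nat.centralBinom_eq_two_mul_choose]
      exact_mod_cast h3
    have hr : ((2*p).choose (p+1) : ℤ) * ((p:ℤ)+1) = ((2*p).choose p : ℤ) * p := by
      have := Nat.choose_succ_right_eq (2*p) p
      rw [show 2*p - p = p by omega] at this
      exact_mod_cast this
    rw [hc, cf]
    nlinarith [hr]
  have := mul_left_cancel₀ (show ((p:ℤ)+1) ≠ 0 by positivity) key
  exact_mod_cast this

lemma sum_range_double (N : ℕ) (f : ℕ → ℕ) :
    ∑ h ∈ Finset.range (2*N), f h = ∑ k ∈ Finset.range N, (f (2*k) + f (2*k+1)) := by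
  induction N with
  | zero => simp
  | succ N ih =>
    rw [show 2*(N+1) = (2*N+1)+1 by ring, Finset.sum_range_succ, Finset.sum_range_succ,
      Finset.sum_range_succ, ih]
    omega

/-- the Hankel entry identity -/
lemma entry_sum (n i j : ℕ) (hi : i < n) (hj : j < n) :
    ∑ k ∈ Finset.range (n+1), cpath (2*i+2) (2*k) * cpath (2*j+2) (2*k)
      = catalan (i+j+2) := by
  have trunc : ∀ N, i+2 ≤ N →
      ∑ k ∈ Finset.range N, cpath (2*i+2) (2*k) * cpath (2*j+2) (2*k)
        = ∑ k ∈ Finset.range (i+2), cpath (2*i+2) (2*k) * cpath (2*j+2) (2*k) := by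
    intro N hN
    rw [← Finset.sum_subset (Finset.range_subset_range.mpr hN)]
    intro x _ hx
    rw [cpath_of_lt (2*i+2) (2*x) (by simp only [Finset.mem_range] at hx; omega), zero_mul]
  have big : ∑ k ∈ Finset.range (i+j+3), cpath (2*i+2) (2*k) * cpath (2*j+2) (2*k)
      = catalan (i+j+2) := by
    have conv := cpath_conv (2*j+2) (2*i+2) (2*(i+j+3)) (by omega)
    rw [sum_range_double] at conv
    have odd0 : ∀ k, cpath (2*i+2) (2*k+1) * cpath (2*j+2) (2*k+1) = 0 := by
      intro k
      rw [show 2*i+2 = 2*(i+1) by ring, cpath_even_odd, zero_mul]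
    simp only [odd0, add_zero] at conv
    rw [conv, show 2*i+2+(2*j+2) = 2*(i+j+2) by ring, cpath_catalan]
  rw [trunc (n+1) (by omega), ← trunc (i+j+3) (by omega), big]

/-! ### Matrices -/

open Matrix

lemma val_succAbove {n : ℕ} (p : Fin (n+1)) (i : Fin n) :
    ((p.succAbove i) : ℕ) = if (i:ℕ) < (p:ℕ) then (i:ℕ) else (i:ℕ)+1 := by
  rcases lt_or_ge ((i:ℕ)) ((p:ℕ)) with h | h
  · rw [Fin.succAbove_of_castSucc_lt p i (by rwa [Fin.lt_def, Fin.coe_castSucc]), if_pos h,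
      Fin.coe_castSucc]
  · rw [Fin.succAbove_of_le_castSucc p i (by rwa [Fin.le_def, Fin.coe_castSucc]), if_neg (by omega),
      Fin.val_succ]

def Tmat (n : ℕ) : Matrix (Fin n) (Fin n) ℤ := Matrix.of fun k l =>
  if (k:ℕ) = (l:ℕ) then 2 else if (k:ℕ) = (l:ℕ)+1 ∨ (l:ℕ) = (k:ℕ)+1 then 1 else 0

lemma detT : ∀ n, (Tmat n).det = n + 1 := by
  intro n
  induction n using Nat.strong_induction_on with
  | _ n ih =>
  match n, ih with
  | 0, _ => simp [Tmat, Matrix.det_fin_zero]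
  | 1, _ => rw [Matrix.det_fin_one]; rfl
  | (n+2), ih =>
    rw [Matrix.det_succ_row_zero, Fin.sum_univ_succ, Fin.sum_univ_succ]
    have hz : ∀ j : Fin n, ((-1:ℤ)) ^ (((j.succ.succ : Fin (n+2))) : ℕ) *
        Tmat (n+2) 0 j.succ.succ *
        ((Tmat (n+2)).submatrix Fin.succ (j.succ.succ).succAbove).det = 0 := by
      intro j
      have h1 : Tmat (n+2) 0 j.succ.succ = 0 := by
        simp only [Tmat, Matrix.of_apply, Fin.val_zero, Fin.val_succ]
        split_ifs <;>
        ((try exact absurd ‹False› not_false);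
         (try exact absurd trivial ‹¬True›);
         (try simp only [false_or, or_false, not_or, not_false_iff, not_true] at *);
         (try exact ‹False›.elim);
         (try omega); done)
      rw [h1]; ring
    rw [Finset.sum_eq_zero (fun j _ => hz j), add_zero]
    have m0 : (Tmat (n+2)).submatrix Fin.succ ((0 : Fin (n+2)).succAbove) = Tmat (n+1) := by
      ext i j
      simp only [Matrix.submatrix_apply, Tmat, Matrix.of_apply, Fin.val_succ, val_succAbove,
        Fin.val_zero, Nat.not_lt_zero, Nat.zero_lt_one, Nat.lt_one_iff, Nat.add_one_ne_zero, if_true, if_false]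
      split_ifs <;>
      ((try exact absurd ‹False› not_false);
       (try exact absurd trivial ‹¬True›);
       (try simp only [false_or, or_false, not_or, not_false_iff, not_true] at *);
       (try exact ‹False›.elim);
       (try omega); done)
    have e00 : Tmat (n+2) 0 0 = 2 := by
      simp only [Tmat, Matrix.of_apply, Fin.val_zero]; norm_num
    have e01 : Tmat (n+2) 0 1 = 1 := by
      simp only [Tmat, Matrix.of_apply, Fin.val_zero, Fin.val_one]; norm_num
    have m1 : ((Tmat (n+2)).submatrix Fin.succ ((1 : Fin (n+2)).succAbove)).det
        = (Tmat n).det := by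
      rw [Matrix.det_succ_column_zero, Fin.sum_univ_succ]
      have hz2 : ∀ i : Fin n, ((-1:ℤ)) ^ (((i.succ : Fin (n+1))) : ℕ) *
          ((Tmat (n+2)).submatrix Fin.succ ((1 : Fin (n+2)).succAbove)) i.succ 0 *
          ((((Tmat (n+2)).submatrix Fin.succ ((1 : Fin (n+2)).succAbove))).submatrix
            i.succ.succAbove Fin.succ).det = 0 := by
        intro i
        have h1 : ((Tmat (n+2)).submatrix Fin.succ ((1 : Fin (n+2)).succAbove)) i.succ 0 = 0 := by
          simp only [Matrix.submatrix_apply, Tmat, Matrix.of_apply, Fin.val_succ, val_succAbove,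
            Fin.val_zero, Fin.val_one, Nat.not_lt_zero, Nat.zero_lt_one, Nat.lt_one_iff, Nat.add_one_ne_zero, if_true, if_false]
          split_ifs <;>
          ((try exact absurd ‹False› not_false);
           (try exact absurd trivial ‹¬True›);
           (try simp only [false_or, or_false, not_or, not_false_iff, not_true] at *);
           (try exact ‹False›.elim);
           (try omega); done)
        rw [h1]; ring
      rw [Finset.sum_eq_zero (fun i _ => hz2 i), add_zero]
      have e10 : ((Tmat (n+2)).submatrix Fin.succ ((1 : Fin (n+2)).succAbove)) 0 0 = 1 := by
        simp only [Matrix.submatrix_apply, Tmat, Matrix.of_apply, Fin.val_succ, val_succAbove,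
          Fin.val_zero, Fin.val_one, Nat.not_lt_zero, Nat.zero_lt_one, Nat.lt_one_iff, Nat.add_one_ne_zero, if_true, if_false]
        split_ifs <;>
        ((try exact absurd ‹False› not_false);
         (try exact absurd trivial ‹¬True›);
         (try simp only [false_or, or_false, not_or, not_false_iff, not_true] at *);
         (try exact ‹False›.elim);
         (try omega); done)
      have msub : (((Tmat (n+2)).submatrix Fin.succ ((1 : Fin (n+2)).succAbove)).submatrix
          (0 : Fin (n+1)).succAbove Fin.succ) = Tmat n := by
        ext i j
        simp only [Matrix.submatrix_apply, Tmat, Matrix.of_apply, Fin.val_succ, val_succAbove,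
          Fin.val_zero, Fin.val_one, Nat.not_lt_zero, Nat.zero_lt_one, Nat.lt_one_iff, Nat.add_one_ne_zero, if_true, if_false]
        split_ifs <;>
        ((try exact absurd ‹False› not_false);
         (try exact absurd trivial ‹¬True›);
         (try simp only [false_or, or_false, not_or, not_false_iff, not_true] at *);
         (try exact ‹False›.elim);
         (try omega); done)
      rw [msub, e10, Fin.val_zero]
      ring
    simp only [Fin.succ_zero_eq_one]
    have d1 := ih (n+1) (by omega)
    have d0 := ih n (by omega)
    rw [m0, m1, e00, e01, d1, d0]
    simp only [Fin.val_zero, Fin.val_one, pow_zero, pow_one]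
    push_cast
    ring

def Lmat (n : ℕ) : Matrix (Fin n) (Fin n) ℤ :=
  Matrix.of fun i k => (cpath (2*(i:ℕ)+1) (2*(k:ℕ)+1) : ℤ)

def Jmat (n : ℕ) : Matrix (Fin n) (Fin (n+1)) ℤ := Matrix.of fun k h =>
  (if (h:ℕ) = (k:ℕ) then 1 else 0) + (if (h:ℕ) = (k:ℕ)+1 then 1 else 0)

def Amat (n : ℕ) : Matrix (Fin n) (Fin (n+1)) ℤ :=
  Matrix.of fun i h => (cpath (2*(i:ℕ)+2) (2*(h:ℕ)) : ℤ)

lemma sum_ite_eq_nat (n v : ℕ) (f : ℕ → ℤ) :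
    ∑ k ∈ Finset.range n, (if v = k then f k else 0) = if v < n then f v else 0 := by
  rw [Finset.sum_ite_eq]
  simp [Finset.mem_range]

lemma key (n iv hv : ℕ) (hi : iv < n) (hh : hv ≤ n) :
    (cpath (2*iv+2) (2*hv) : ℤ)
      = (if hv < n then (cpath (2*iv+1) (2*hv+1) : ℤ) else 0)
        + (if 1 ≤ hv ∧ hv ≤ n then (cpath (2*iv+1) (2*(hv-1)+1) : ℤ) else 0) := by
  match hv with
  | 0 =>
    rw [if_pos (by omega), if_neg (by omega), add_zero]
    norm_num
    rw [show 2*iv+2 = (2*iv+1)+1 from rfl, cpath_succ_zero]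
  | w+1 =>
    rw [if_pos (show 1 ≤ w+1 ∧ w+1 ≤ n by omega)]
    rw [show 2*iv+2 = (2*iv+1)+1 from rfl, show 2*(w+1) = (2*w+1)+1 from by ring,
      cpath_succ_succ, show w+1-1 = w from rfl]
    rcases lt_or_ge (w+1) n with hw | hw
    · rw [if_pos hw, show 2*w+1+2 = 2*(w+1)+1 from by ring]
      push_cast
      ring
    · rw [if_neg (by omega), cpath_of_lt (2*iv+1) (2*w+1+2) (by omega)]
      push_cast
      ring

lemma A_eq (n : ℕ) : Amat n = Lmat n * Jmat n := by
  ext i h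
  rw [Matrix.mul_apply]
  simp only [Lmat, Jmat, Amat, Matrix.of_apply]
  rw [Fin.sum_univ_eq_sum_range
    (fun k => (cpath (2*(i:ℕ)+1) (2*k+1) : ℤ) *
      ((if (h:ℕ) = k then 1 else 0) + (if (h:ℕ) = k+1 then 1 else 0))) n]
  have split : ∀ k, (cpath (2*(i:ℕ)+1) (2*k+1) : ℤ) *
        ((if (h:ℕ) = k then 1 else 0) + (if (h:ℕ) = k+1 then 1 else 0))
      = (if (h:ℕ) = k then (cpath (2*(i:ℕ)+1) (2*k+1) : ℤ) else 0)
        + (if (h:ℕ) = k+1 then (cpath (2*(i:ℕ)+1) (2*k+1) : ℤ) else 0) := by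
    intro k; split_ifs <;> ring
  rw [Finset.sum_congr rfl (fun k _ => split k), Finset.sum_add_distrib, sum_ite_eq_nat]
  have shift : ∑ k ∈ Finset.range n, (if (h:ℕ) = k+1 then (cpath (2*(i:ℕ)+1) (2*k+1) : ℤ) else 0)
      = if 1 ≤ (h:ℕ) ∧ (h:ℕ) ≤ n then (cpath (2*(i:ℕ)+1) (2*((h:ℕ)-1)+1) : ℤ) else 0 := by
    match hv : (h:ℕ) with
    | 0 => simp
    | w+1 =>
      have hrw : ∀ k, (if w+1 = k+1 then (cpath (2*(i:ℕ)+1) (2*k+1) : ℤ) else 0)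
          = (if w = k then (cpath (2*(i:ℕ)+1) (2*k+1) : ℤ) else 0) := by
        intro k; split_ifs <;> first | rfl | omega
      rw [Finset.sum_congr rfl (fun k _ => hrw k), sum_ite_eq_nat]
      have hb : w + 1 ≤ n := by omega
      simp only [show w+1-1 = w from rfl]
      split_ifs <;> first | rfl | omega
  rw [shift]
  exact key n i h i.isLt (by omega)

lemma sum_delta2 (N a b : ℕ) (ha : a < N) :
    ∑ h ∈ Finset.range N, (if h = a then (1:ℤ) else 0) * (if h = b then 1 else 0)
      = if a = b then 1 else 0 := by
  rw [Finset.sum_eq_single a]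
  · simp
  · intro c _ hc; rw [if_neg hc, zero_mul]
  · intro hnot; exact absurd (Finset.mem_range.mpr ha) hnot

lemma JJT (n : ℕ) : Jmat n * (Jmat n)ᵀ = Tmat n := by
  ext k l
  rw [Matrix.mul_apply]
  simp only [Jmat, Tmat, Matrix.transpose_apply, Matrix.of_apply]
  rw [Fin.sum_univ_eq_sum_range
    (fun h => ((if h = (k:ℕ) then (1:ℤ) else 0) + (if h = (k:ℕ)+1 then 1 else 0)) *
      ((if h = (l:ℕ) then 1 else 0) + (if h = (l:ℕ)+1 then 1 else 0))) (n+1)]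
  have expand : ∀ h, ((if h = (k:ℕ) then (1:ℤ) else 0) + (if h = (k:ℕ)+1 then 1 else 0)) *
        ((if h = (l:ℕ) then 1 else 0) + (if h = (l:ℕ)+1 then 1 else 0))
      = (if h = (k:ℕ) then (1:ℤ) else 0) * (if h = (l:ℕ) then 1 else 0)
        + (if h = (k:ℕ) then (1:ℤ) else 0) * (if h = (l:ℕ)+1 then 1 else 0)
        + ((if h = (k:ℕ)+1 then (1:ℤ) else 0) * (if h = (l:ℕ) then 1 else 0)
        + (if h = (k:ℕ)+1 then (1:ℤ) else 0) * (if h = (l:ℕ)+1 then 1 else 0)) := by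
    intro h; ring
  rw [Finset.sum_congr rfl (fun h _ => expand h), Finset.sum_add_distrib,
    Finset.sum_add_distrib, Finset.sum_add_distrib,
    sum_delta2 (n+1) (k:ℕ) (l:ℕ) (by omega),
    sum_delta2 (n+1) (k:ℕ) ((l:ℕ)+1) (by omega),
    sum_delta2 (n+1) ((k:ℕ)+1) (l:ℕ) (by omega),
    sum_delta2 (n+1) ((k:ℕ)+1) ((l:ℕ)+1) (by omega)]
  have hkl : ((k:ℕ) = (l:ℕ)+1 → ¬ (l:ℕ) = (k:ℕ)+1) := by omega
  split_ifs <;>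
  ((try exact absurd ‹False› not_false);
   (try exact absurd trivial ‹¬True›);
   (try simp only [false_or, or_false, not_or, not_false_iff, not_true] at *);
   (try exact ‹False›.elim);
   (try omega); done)

lemma detL (n : ℕ) : (Lmat n).det = 1 := by
  have ht : (Lmat n).BlockTriangular OrderDual.toDual := by
    intro i j hij
    have : (i:ℕ) < (j:ℕ) := hij
    simp only [Lmat, Matrix.of_apply]
    rw [cpath_of_lt (2*(i:ℕ)+1) (2*(j:ℕ)+1) (by omega)]
    rfl
  rw [Matrix.det_of_lowerTriangular (Lmat n) ht]
  have : ∀ i : Fin n, Lmat n i i = 1 := by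
    intro i
    simp only [Lmat, Matrix.of_apply]
    rw [cpath_diag]
    rfl
  simp [this]

theorem hankel_catalan_shift2 (n : ℕ) (hn : 0 < n) :
    Matrix.det (Matrix.of (fun i j : Fin n => (catalan ((i : ℕ) + j + 2) : ℤ))) = n + 1 := by
  have hH : Matrix.of (fun i j : Fin n => (catalan ((i : ℕ) + j + 2) : ℤ))
      = Amat n * (Amat n)ᵀ := by
    ext i j
    rw [Matrix.mul_apply]
    simp only [Amat, Matrix.transpose_apply, Matrix.of_apply]
    rw [Fin.sum_univ_eq_sum_range
      (fun k => (cpath (2*(i:ℕ)+2) (2*k) : ℤ) * (cpath (2*(j:ℕ)+2) (2*k) : ℤ)) (n+1)]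
    have := entry_sum n i j i.isLt j.isLt
    calc (catalan ((i:ℕ) + j + 2) : ℤ)
        = ((∑ k ∈ Finset.range (n+1), cpath (2*(i:ℕ)+2) (2*k) * cpath (2*(j:ℕ)+2) (2*k) : ℕ) : ℤ) := by
          rw [this]
      _ = _ := by push_cast; rfl
  rw [hH, A_eq]
  have rearr : (Lmat n * Jmat n) * (Lmat n * Jmat n)ᵀ
      = Lmat n * (Jmat n * (Jmat n)ᵀ) * (Lmat n)ᵀ := by
    rw [Matrix.transpose_mul]
    rw [Matrix.mul_assoc, Matrix.mul_assoc, Matrix.mul_assoc]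
  rw [rearr, JJT, Matrix.det_mul, Matrix.det_mul, detL, Matrix.det_transpose, detL, detT]
  push_cast
  ring
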